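/- For the space 𝔛 built from 𝔛_n = 𝔖_{n, d_n, 2} with d_n = k (for fixed 1 < k ≤ 2) via the disjoint-union construction with k_0 = 2: for p ∈ [1,∞), the weak (p,p) constant c^c_𝔛(k′,p) is infinite for every k′ < k (since c^c_{𝔛_n}(k′,p) ≳ n^{1/p} → ∞), and c_𝔛(k′,p) < ∞ for every k′ ≥ k. -/

import Mathlib

open scoped ENNReal Classical

/-- The distance on the space `𝔛` obtained by gluing (with `k₀ = 2`, inter-component
distance `3`) the rescaled basic spaces `𝔛_n = 𝔖_{τ_n, d_n, m_n}` with `τ_n = n`, `d_n = k`,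
`m_n = 2`. A point `(n, i)` with `1 ≤ i ≤ n + 1` is the point `x_i` of the `n`-th basic
space (rescaled to diameter `≤ 1`), `(n, 0)` is its center `x_0`; points `(n, i)` with
`i > n + 1` are phantom points of measure `0`. -/
noncomputable def DU (k : ℝ) : ℕ × ℕ → ℕ × ℕ → ℝ := fun x y =>
  if x.1 = y.1 then
    (if x.2 = y.2 then 0 else if x.2 = 0 ∨ y.2 = 0 then 1 / 2 else k / 2)
  else 3

/-- The measure of `𝔛`, rescaled so that the `n`-th component has total mass `2^(-n)`. -/
noncomputable def wU : ℕ × ℕ → ℝ≥0∞ := fun x =>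
  if x.2 ≤ x.1 + 1 then
    (if x.2 = 0 then (2 : ℝ≥0∞) ^ (-(x.1 : ℤ)) / (2 * x.1 + 3)
      else 2 * ((2 : ℝ≥0∞) ^ (-(x.1 : ℤ)) / (2 * x.1 + 3)))
  else 0

/-- Open balls of `𝔛`. -/
noncomputable def ballU (k : ℝ) (c : ℕ × ℕ) (r : ℝ) : Set (ℕ × ℕ) := {y | DU k c y < r}

/-- The centered modified maximal operator `M_{k'}^c` on `𝔛`. -/
noncomputable def McU (k k' : ℝ) (f : ℕ × ℕ → ℝ≥0∞) (x : ℕ × ℕ) : ℝ≥0∞ :=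
  ⨆ (r : ℝ) (_ : 0 < r),
    (∑' y : ballU k x r, f y.val * wU y.val) / (∑' y : ballU k x (k' * r), wU y.val)

/-- The non-centered modified maximal operator `M_{k'}` on `𝔛`. -/
noncomputable def MU (k k' : ℝ) (f : ℕ × ℕ → ℝ≥0∞) (x : ℕ × ℕ) : ℝ≥0∞ :=
  ⨆ (c : ℕ × ℕ) (r : ℝ) (_ : 0 < r) (_ : x ∈ ballU k c r),
    (∑' y : ballU k c r, f y.val * wU y.val) / (∑' y : ballU k c (k' * r), wU y.val)

open MeasureTheory

namespace Stmt18

noncomputable def D (n : ℕ) : ℝ≥0∞ := (2 : ℝ≥0∞) ^ (-(n : ℤ))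

lemma D_eq (n : ℕ) : D n = (2⁻¹ : ℝ≥0∞) ^ n := by
  rw [D, ENNReal.zpow_neg, zpow_natCast, ← ENNReal.inv_pow]

lemma D_ne_zero (n : ℕ) : D n ≠ 0 := by
  rw [D_eq]
  exact pow_ne_zero _ (ENNReal.inv_ne_zero.2 (by norm_num))

lemma D_ne_top (n : ℕ) : D n ≠ ∞ := by
  rw [D_eq]
  exact ENNReal.pow_ne_top (ENNReal.inv_ne_top.2 (by norm_num))

lemma tsum_D : ∑' n, D n = 2 := by
  simp_rw [D_eq]
  rw [ENNReal.tsum_geometric]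
  have h1 : (1 : ℝ≥0∞) - 2⁻¹ = 2⁻¹ :=
    ENNReal.sub_eq_of_eq_add (ENNReal.inv_ne_top.2 (by norm_num))
      (ENNReal.inv_two_add_inv_two).symm
  rw [h1, inv_inv]

noncomputable def w0 (n : ℕ) : ℝ≥0∞ := D n / (2 * n + 3)

lemma c23_ne_zero (n : ℕ) : (2 * (n : ℝ≥0∞) + 3) ≠ 0 :=
  ne_of_gt (lt_of_lt_of_le (by norm_num : (0:ℝ≥0∞) < 3) le_add_self)

lemma c23_ne_top (n : ℕ) : (2 * (n : ℝ≥0∞) + 3) ≠ ∞ :=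
  ENNReal.add_ne_top.2 ⟨ENNReal.mul_ne_top (by norm_num) (ENNReal.natCast_ne_top n), by norm_num⟩

lemma w0_ne_zero (n : ℕ) : w0 n ≠ 0 := by
  intro h
  rcases ENNReal.div_eq_zero_iff.1 h with h | h
  · exact D_ne_zero n h
  · exact c23_ne_top n h

lemma w0_ne_top (n : ℕ) : w0 n ≠ ∞ := by
  intro h
  rcases ENNReal.div_eq_top.1 h with ⟨_, h0⟩ | ⟨ht, _⟩
  · exact c23_ne_zero n h0
  · exact D_ne_top n ht

lemma wU_zero (n : ℕ) : wU (n, 0) = w0 n := by simp [wU, w0, D]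

lemma wU_pos (n i : ℕ) (h1 : i ≠ 0) (h2 : i ≤ n + 1) : wU (n, i) = 2 * w0 n := by
  simp [wU, w0, D, h1, h2]

lemma wU_phantom (n i : ℕ) (h : n + 1 < i) : wU (n, i) = 0 := by
  simp only [wU]
  rw [if_neg (by omega)]

lemma comp_mass (n : ℕ) : ∑' i, wU (n, i) = D n := by
  rw [tsum_eq_sum (s := Finset.range (n + 2))
      (fun i hi => wU_phantom n i (by simp [Finset.mem_range] at hi; omega))]
  rw [Finset.sum_range_succ']
  rw [Finset.sum_congr rfl (fun i hi => wU_pos n (i+1) (by omega)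
      (by simpa [Finset.mem_range, Nat.lt_succ_iff] using hi))]
  rw [Finset.sum_const, wU_zero, Finset.card_range, nsmul_eq_mul]
  have h1 : ((n + 1 : ℕ) : ℝ≥0∞) * (2 * w0 n) + w0 n = (2 * n + 3) * w0 n := by
    push_cast; ring
  rw [h1, w0, ENNReal.mul_div_cancel (c23_ne_zero n) (c23_ne_top n)]

lemma total_mass : ∑' x : ℕ × ℕ, wU x = 2 := by
  rw [ENNReal.tsum_prod']
  simp_rw [comp_mass]
  exact tsum_D

def fiberEquiv (n : ℕ) : ℕ ≃ {y : ℕ × ℕ | y.1 = n} where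
  toFun i := ⟨(n, i), rfl⟩
  invFun y := y.1.2
  left_inv i := rfl
  right_inv y := Subtype.ext (Prod.ext y.2.symm rfl)

lemma tsum_fiber (g : ℕ × ℕ → ℝ≥0∞) (n : ℕ) :
    ∑' y : {y : ℕ × ℕ | y.1 = n}, g y.val = ∑' i, g (n, i) :=
  ((fiberEquiv n).tsum_eq (fun y : {y : ℕ × ℕ | y.1 = n} => g y.val)).symm

lemma tsum_set_mono (g : ℕ × ℕ → ℝ≥0∞) {S T : Set (ℕ × ℕ)} (h : S ⊆ T) :
    ∑' y : S, g y.val ≤ ∑' y : T, g y.val := by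
  rw [tsum_subtype, tsum_subtype]
  exact ENNReal.tsum_le_tsum fun x =>
    Set.indicator_le_indicator_of_subset h (fun _ => zero_le) x

lemma tsum_pair' (g : ℕ × ℕ → ℝ≥0∞) {a b : ℕ × ℕ} (h : a ≠ b) :
    ∑' y : ({a, b} : Set (ℕ × ℕ)), g y.val = g a + g b := by
  rw [tsum_subtype]
  rw [tsum_eq_sum (s := {a, b}) (by intro x hx; exact Set.indicator_of_notMem (by simpa using hx) _)]
  rw [Finset.sum_pair h]
  simp [Set.indicator_apply]

lemma holder {α : Type*} [Countable α] (f w : α → ℝ≥0∞) {p : ℝ} (hp : 1 ≤ p) :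
    ∑' a, f a * w a ≤ (∑' a, f a ^ p * w a) ^ (1/p) * (∑' a, w a) ^ (1 - 1/p) := by
  rcases eq_or_lt_of_le hp with h1 | h1
  · rw [← h1]
    norm_num
  · letI : MeasurableSpace α := ⊤
    haveI : MeasurableSingletonClass α := ⟨fun _ => MeasurableSpace.measurableSet_top⟩
    have hp0 : (0:ℝ) < p := lt_trans one_pos h1
    have hpq : p.HolderConjugate (Real.conjExponent p) := Real.HolderConjugate.conjExponent h1
    set q := Real.conjExponent p with hq
    have hq0 : 0 < q := hpq.symm.pos
    have hsum : 1/p + 1/q = 1 := by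
      rw [one_div, one_div]; exact hpq.inv_add_inv_eq_one
    have h1q : (1:ℝ)/q = 1 - 1/p := by linarith
    have key := ENNReal.lintegral_mul_le_Lp_mul_Lq (μ := Measure.count) hpq
      (f := fun a => f a * w a ^ (1/p)) (g := fun a => w a ^ (1/q))
      (measurable_of_countable _).aemeasurable (measurable_of_countable _).aemeasurable
    simp only [Pi.mul_apply] at key
    rw [lintegral_count, lintegral_count, lintegral_count] at key
    have e1 : ∀ a : α, f a * w a ^ (1/p) * w a ^ (1/q) = f a * w a := by
      intro a
      rw [mul_assoc, ← ENNReal.rpow_add_of_nonneg _ _ (by positivity) (by positivity),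
        hsum, ENNReal.rpow_one]
    have e2 : ∀ a : α, (f a * w a ^ (1/p)) ^ p = f a ^ p * w a := by
      intro a
      rw [ENNReal.mul_rpow_of_nonneg _ _ hp0.le, ← ENNReal.rpow_mul,
        one_div_mul_cancel hp0.ne', ENNReal.rpow_one]
    have e3 : ∀ a : α, (w a ^ (1/q)) ^ q = w a := by
      intro a
      rw [← ENNReal.rpow_mul, one_div_mul_cancel hq0.ne', ENNReal.rpow_one]
    simp_rw [e1, e2, e3] at key
    rwa [h1q] at key

lemma weak_bound {lam I J Dm : ℝ≥0∞} {p : ℝ} (hp : 1 ≤ p) (hD0 : Dm ≠ 0) (hDt : Dm ≠ ∞)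
    (hH : I ≤ J ^ (1/p) * Dm ^ (1 - 1/p)) (h : lam < I / Dm) : lam ^ p * Dm ≤ J := by
  have hp0 : (0:ℝ) < p := lt_of_lt_of_le one_pos hp
  have h1 : lam * Dm < I := (ENNReal.lt_div_iff_mul_lt (Or.inl hD0) (Or.inl hDt)).1 h
  have h2 : (lam * Dm) ^ p ≤ (J ^ (1/p) * Dm ^ (1 - 1/p)) ^ p :=
    ENNReal.rpow_le_rpow (le_of_lt (lt_of_lt_of_le h1 hH)) hp0.le
  rw [ENNReal.mul_rpow_of_nonneg _ _ hp0.le, ENNReal.mul_rpow_of_nonneg _ _ hp0.le,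
      ← ENNReal.rpow_mul J, one_div_mul_cancel hp0.ne', ENNReal.rpow_one,
      ← ENNReal.rpow_mul Dm] at h2
  have hexp : (1 - 1/p) * p = p - 1 := by field_simp
  rw [hexp] at h2
  have hDp : Dm ^ p = Dm ^ (p - 1) * Dm := by
    have := ENNReal.rpow_add_of_nonneg (x := Dm) (p - 1) 1 (by linarith) zero_le_one
    rw [sub_add_cancel, ENNReal.rpow_one] at this
    exact this
  have hpow0 : Dm ^ (p - 1) ≠ 0 := (ENNReal.rpow_pos (zero_lt_iff.2 hD0) hDt).ne'
  have hpowt : Dm ^ (p - 1) ≠ ∞ := ENNReal.rpow_ne_top_of_nonneg (by linarith) hDt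
  rw [← ENNReal.mul_le_mul_iff_left hpow0 hpowt]
  calc lam ^ p * Dm * Dm ^ (p - 1) = lam ^ p * Dm ^ p := by rw [hDp]; ring
    _ ≤ J * Dm ^ (p - 1) := h2

end Stmt18

namespace Stmt18

section balls
variable {k r : ℝ} {c : ℕ × ℕ}

lemma DU_self (k : ℝ) (x : ℕ × ℕ) : DU k x x = 0 := by simp [DU]

lemma ballU_small (hk : 1 ≤ k) (hr0 : 0 < r) (hr : r ≤ 1/2) : ballU k c r = {c} := by
  ext y
  simp only [ballU, Set.mem_setOf_eq, Set.mem_singleton_iff]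
  constructor
  · intro h
    unfold DU at h
    split_ifs at h with h1 h2 h3
    · exact (Prod.ext h1 h2).symm
    · linarith
    · linarith
    · linarith
  · rintro rfl
    simpa [DU] using hr0

lemma ballU_subset_fiber (hr : r ≤ 3) : ballU k c r ⊆ {y | y.1 = c.1} := by
  intro y hy
  simp only [ballU, Set.mem_setOf_eq] at hy
  simp only [Set.mem_setOf_eq]
  by_contra h
  rw [DU, if_neg (fun hh => h hh.symm)] at hy
  linarith

lemma fiber_subset_ballU (hk : 1 ≤ k) (hr : k/2 < r) :
    {y : ℕ × ℕ | y.1 = c.1} ⊆ ballU k c r := by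
  intro y hy
  simp only [Set.mem_setOf_eq] at hy
  show DU k c y < r
  rw [DU, if_pos hy.symm]
  split_ifs <;> linarith

lemma ballU_univ (hk2 : k ≤ 2) (hr : 3 < r) : ∀ y, y ∈ ballU k c r := by
  intro y
  show DU k c y < r
  rw [DU]
  split_ifs <;> linarith

lemma ballU_pair {n i : ℕ} (hk1 : 1 < k) (hk2 : k ≤ 2) (hi : i ≠ 0)
    (hr1 : 1/2 < r) (hr2 : r ≤ k/2) :
    ballU k (n, i) r = {(n, 0), (n, i)} := by
  ext ⟨m, j⟩
  simp only [ballU, Set.mem_setOf_eq, Set.mem_insert_iff, Set.mem_singleton_iff, Prod.mk.injEq]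
  constructor
  · intro h
    rw [DU] at h
    simp only at h
    by_cases hm : n = m
    · rw [if_pos hm] at h
      subst hm
      by_cases hij : i = j
      · right; exact ⟨rfl, hij.symm⟩
      · rw [if_neg hij] at h
        by_cases hj : i = 0 ∨ j = 0
        · rcases hj with h0 | h0
          · exact absurd h0 hi
          · left; exact ⟨rfl, h0⟩
        · rw [if_neg hj] at h; linarith
    · rw [if_neg hm] at h; linarith
  · rintro (⟨h1, h2⟩ | ⟨h1, h2⟩)
    · have hd : DU k (n, i) (m, j) = 1/2 := by simp [DU, h1, h2, hi]
      rw [hd]; exact hr1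
    · have hd : DU k (n, i) (m, j) = 0 := by simp [DU, h1, h2]
      rw [hd]; linarith

end balls

lemma MU_le {k k' : ℝ} (hk1 : 1 < k) (hk2 : k ≤ 2) (hk' : k ≤ k')
    (f : ℕ × ℕ → ℝ≥0∞) (x : ℕ × ℕ) :
    MU k k' f x ≤ f x ⊔ ((∑' i, f (x.1, i) * wU (x.1, i)) / D x.1)
      ⊔ ((∑' z, f z * wU z) / 2) := by
  rw [MU]
  refine iSup_le fun c => iSup_le fun r => iSup_le fun hr => iSup_le fun hx => ?_
  have hk'1 : (1:ℝ) < k' := lt_of_lt_of_le hk1 hk'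
  rcases le_or_gt r (1/2) with h1 | h1
  · -- tiny ball
    have hb : ballU k c r = {c} := ballU_small hk1.le hr h1
    have hxc : x = c := by rw [hb] at hx; exact hx
    have hnum : (∑' y : ballU k c r, f y.val * wU y.val) = f c * wU c := by
      rw [hb]; exact tsum_singleton c (fun y => f y * wU y)
    have hc' : c ∈ ballU k c (k' * r) := by
      show DU k c c < k' * r
      rw [DU_self]
      positivity
    have hden : wU c ≤ ∑' y : ballU k c (k' * r), wU y.val :=
      ENNReal.le_tsum (⟨c, hc'⟩ : ballU k c (k' * r))
    refine le_sup_of_le_left (le_sup_of_le_left ?_)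
    rw [hnum, hxc]
    calc (f c * wU c) / (∑' y : ballU k c (k' * r), wU y.val)
        ≤ (f c * wU c) / wU c := ENNReal.div_le_div_left hden _
      _ ≤ f c := ENNReal.div_le_of_le_mul le_rfl
  · rcases le_or_gt r 3 with h2 | h2
    · -- component ball
      have hsub : ballU k c r ⊆ {y : ℕ × ℕ | y.1 = c.1} := ballU_subset_fiber h2
      have hx1 : x.1 = c.1 := hsub hx
      have hnum : (∑' y : ballU k c r, f y.val * wU y.val) ≤ ∑' i, f (c.1, i) * wU (c.1, i) := by
        calc (∑' y : ballU k c r, f y.val * wU y.val)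
            ≤ ∑' y : {y : ℕ × ℕ | y.1 = c.1}, f y.val * wU y.val :=
              tsum_set_mono (fun y => f y * wU y) hsub
          _ = _ := tsum_fiber (fun y => f y * wU y) c.1
      have hkr : k/2 < k' * r := by
        have ha : k * r ≤ k' * r := mul_le_mul_of_nonneg_right hk' (by linarith)
        nlinarith
      have hden : D c.1 ≤ ∑' y : ballU k c (k' * r), wU y.val := by
        calc D c.1 = ∑' i, wU (c.1, i) := (comp_mass c.1).symm
          _ = ∑' y : {y : ℕ × ℕ | y.1 = c.1}, wU y.val := (tsum_fiber wU c.1).symm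
          _ ≤ _ := tsum_set_mono wU (fiber_subset_ballU hk1.le hkr)
      refine le_sup_of_le_left (le_sup_of_le_right ?_)
      rw [hx1]
      exact ENNReal.div_le_div hnum hden
    · -- huge ball
      have hnum : (∑' y : ballU k c r, f y.val * wU y.val) ≤ ∑' z, f z * wU z := by
        calc (∑' y : ballU k c r, f y.val * wU y.val)
            ≤ ∑' y : (Set.univ : Set (ℕ × ℕ)), f y.val * wU y.val :=
              tsum_set_mono (fun z => f z * wU z) (Set.subset_univ _)
          _ = _ := tsum_univ fun z => f z * wU z
      have hkr : (3:ℝ) < k' * r := by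
        have : r ≤ k' * r := le_mul_of_one_le_left (by linarith) hk'1.le
        linarith
      have hden : (2:ℝ≥0∞) ≤ ∑' y : ballU k c (k' * r), wU y.val := by
        have hset : ballU k c (k' * r) = Set.univ :=
          Set.eq_univ_of_forall (ballU_univ hk2 hkr)
        rw [hset, tsum_univ, total_mass]
      exact le_sup_of_le_right (ENNReal.div_le_div hnum hden)

end Stmt18

open Stmt18

/-- For the space `𝔛` built from the basic spaces `𝔖_{n,k,2}` (fixed `1 < k ≤ 2`) via the
disjoint-union construction with `k₀ = 2`: for `p ∈ [1,∞)`, the weak `(p,p)` constant of the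
centered operator `M_{k'}^c` is infinite for every `1 ≤ k' < k`, while the non-centered
operator `M_{k'}` has a finite weak `(p,p)` constant for every `k' ≥ k`. -/
theorem stmt18 (k p : ℝ) (hk1 : 1 < k) (hk2 : k ≤ 2) (hp : 1 ≤ p) :
    (∀ k', 1 ≤ k' → k' < k → ∀ C : ℝ≥0∞, C ≠ ∞ →
      ¬ (∀ (f : ℕ × ℕ → ℝ≥0∞) (lam : ℝ≥0∞),
          lam * (∑' y : {x : ℕ × ℕ | lam < McU k k' f x}, wU y.val) ^ (1 / p)
            ≤ C * (∑' x : ℕ × ℕ, f x ^ p * wU x) ^ (1 / p))) ∧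
    (∀ k', k ≤ k' → ∃ C : ℝ≥0∞, C ≠ ∞ ∧
      ∀ (f : ℕ × ℕ → ℝ≥0∞) (lam : ℝ≥0∞),
        lam * (∑' y : {x : ℕ × ℕ | lam < MU k k' f x}, wU y.val) ^ (1 / p)
          ≤ C * (∑' x : ℕ × ℕ, f x ^ p * wU x) ^ (1 / p)) := by
  have hp0 : (0:ℝ) < p := lt_of_lt_of_le one_pos hp
  have h1p0 : (0:ℝ) < 1/p := one_div_pos.2 hp0
  constructor
  · -- Part 1: centered operator is unbounded for k' < k
    intro k' hk'1 hk'k C hC h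
    have hk'0 : (0:ℝ) < k' := lt_of_lt_of_le one_pos hk'1
    obtain ⟨n, hn⟩ := ENNReal.exists_nat_gt
      (ENNReal.rpow_ne_top_of_nonneg hp0.le (ENNReal.mul_ne_top (by norm_num) hC)
        : (4 * C) ^ p ≠ ∞)
    set f : ℕ × ℕ → ℝ≥0∞ := fun x => if x = (n, 0) then 1 else 0 with hf
    have hRHS : (∑' x : ℕ × ℕ, f x ^ p * wU x) = w0 n := by
      rw [tsum_eq_single (n, 0) (by
        intro b hb
        simp [hf, hb, ENNReal.zero_rpow_of_pos hp0])]
      simp [hf, wU_zero]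
    -- geometry of the balls
    set r0 : ℝ := k / (2 * k') with hr0
    have hr0pos : 0 < r0 := by positivity
    have hk'r0 : k' * r0 = k / 2 := by rw [hr0]; field_simp
    have hr0half : 1/2 < r0 := by
      rw [hr0, lt_div_iff₀ (by positivity : (0:ℝ) < 2 * k')]
      linarith
    have hr0le : r0 ≤ k/2 := by
      rw [hr0, div_le_div_iff₀ (by positivity) (by norm_num : (0:ℝ) < 2)]
      nlinarith
    have hMc : ∀ i : ℕ, i ≠ 0 → i ≤ n + 1 → (3:ℝ≥0∞)⁻¹ ≤ McU k k' f (n, i) := by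
      intro i hi hile
      have hne : ((n, 0) : ℕ × ℕ) ≠ (n, i) := by
        simp [Prod.ext_iff, Ne.symm hi]
      have hb1 : ballU k (n, i) r0 = {(n, 0), (n, i)} :=
        ballU_pair hk1 hk2 hi hr0half hr0le
      have hb2 : ballU k (n, i) (k' * r0) = {(n, 0), (n, i)} := by
        rw [hk'r0]
        exact ballU_pair hk1 hk2 hi (by linarith) le_rfl
      have hnum : (∑' y : ballU k (n, i) r0, f y.val * wU y.val) = w0 n := by
        rw [hb1, tsum_pair' (fun y => f y * wU y) hne]
        simp [hf, wU_zero, hne.symm]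
      have hden : (∑' y : ballU k (n, i) (k' * r0), wU y.val) = 3 * w0 n := by
        rw [hb2, tsum_pair' wU hne, wU_zero, wU_pos n i hi hile]
        ring
      have hterm : (∑' y : ballU k (n, i) r0, f y.val * wU y.val) /
          (∑' y : ballU k (n, i) (k' * r0), wU y.val) = 3⁻¹ := by
        rw [hnum, hden]
        nth_rewrite 1 [← one_mul (w0 n)]
        rw [ENNReal.mul_div_mul_right 1 3 (w0_ne_zero n) (w0_ne_top n), one_div]
      rw [McU]
      exact le_iSup_of_le r0 (le_iSup_of_le hr0pos hterm.ge)
    have hmem : ∀ i : ℕ, i ≠ 0 → i ≤ n + 1 →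
        (n, i) ∈ {x : ℕ × ℕ | (4:ℝ≥0∞)⁻¹ < McU k k' f x} := by
      intro i hi hile
      exact lt_of_lt_of_le (ENNReal.inv_lt_inv.2 (by norm_num)) (hMc i hi hile)
    have hElow : ((n:ℝ≥0∞) + 1) * w0 n
        ≤ ∑' y : {x : ℕ × ℕ | (4:ℝ≥0∞)⁻¹ < McU k k' f x}, wU y.val := by
      rw [tsum_subtype]
      set F : Finset (ℕ × ℕ) := (Finset.Icc 1 (n+1)).image (fun i => (n, i)) with hF
      have hcard : F.card = n + 1 := by
        rw [hF, Finset.card_image_of_injective _ (fun a b hab => by simpa using hab),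
          Nat.card_Icc]
        omega
      calc ((n:ℝ≥0∞) + 1) * w0 n = ∑ _x ∈ F, w0 n := by
            rw [Finset.sum_const, hcard, nsmul_eq_mul]
            push_cast
            ring
        _ ≤ ∑ x ∈ F, Set.indicator {x : ℕ × ℕ | (4:ℝ≥0∞)⁻¹ < McU k k' f x} wU x := by
            refine Finset.sum_le_sum fun x hx => ?_
            rw [hF, Finset.mem_image] at hx
            obtain ⟨i, hiI, rfl⟩ := hx
            rw [Finset.mem_Icc] at hiI
            rw [Set.indicator_of_mem (hmem i (by omega) hiI.2) wU,
              wU_pos n i (by omega) hiI.2]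
            exact le_mul_of_one_le_left zero_le one_le_two
        _ ≤ _ := ENNReal.sum_le_tsum F
    specialize h f 4⁻¹
    rw [hRHS] at h
    have hle : (4:ℝ≥0∞)⁻¹ * (((n:ℝ≥0∞) + 1) * w0 n) ^ (1/p) ≤ C * w0 n ^ (1/p) :=
      le_trans (mul_le_mul_right (ENNReal.rpow_le_rpow hElow h1p0.le) _) h
    rw [ENNReal.mul_rpow_of_nonneg _ _ h1p0.le, ← mul_assoc] at hle
    have hw0p0 : (w0 n) ^ (1/p) ≠ 0 :=
      (ENNReal.rpow_pos (zero_lt_iff.2 (w0_ne_zero n)) (w0_ne_top n)).ne'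
    have hw0pt : (w0 n) ^ (1/p) ≠ ∞ := ENNReal.rpow_ne_top_of_nonneg h1p0.le (w0_ne_top n)
    have hle2 : (4:ℝ≥0∞)⁻¹ * ((n:ℝ≥0∞) + 1) ^ (1/p) ≤ C :=
      (ENNReal.mul_le_mul_iff_left hw0p0 hw0pt).1 hle
    have hle3 : ((n:ℝ≥0∞) + 1) ^ (1/p) ≤ 4 * C := by
      have h4 := mul_le_mul_right hle2 (4:ℝ≥0∞)
      rwa [← mul_assoc, ENNReal.mul_inv_cancel (by norm_num) (by norm_num), one_mul] at h4
    have hgt : 4 * C < ((n:ℝ≥0∞) + 1) ^ (1/p) := by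
      have h1 : (4:ℝ≥0∞) * C = ((4 * C) ^ p) ^ (1/p) := by
        rw [← ENNReal.rpow_mul, mul_one_div_cancel hp0.ne', ENNReal.rpow_one]
      rw [h1]
      exact ENNReal.rpow_lt_rpow (lt_of_lt_of_le hn le_self_add) h1p0
    exact absurd hle3 (not_le.2 hgt)
  · -- Part 2: non-centered operator is bounded for k' ≥ k
    intro k' hk'
    refine ⟨3, by norm_num, fun f lam => ?_⟩
    set Jt := ∑' x : ℕ × ℕ, f x ^ p * wU x with hJtdef
    set A : ℕ → ℝ≥0∞ := fun n => (∑' i, f (n, i) * wU (n, i)) / D n with hA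
    set T : ℝ≥0∞ := (∑' z : ℕ × ℕ, f z * wU z) / 2 with hT
    have hJt : Jt = ∑' n, ∑' i, f (n, i) ^ p * wU (n, i) := ENNReal.tsum_prod'
    -- pointwise indicator bound
    have hptwise : ∀ x : ℕ × ℕ,
        Set.indicator {x : ℕ × ℕ | lam < MU k k' f x} wU x ≤
          Set.indicator {x : ℕ × ℕ | lam < f x} wU x +
          Set.indicator {x : ℕ × ℕ | lam < A x.1} wU x +
          Set.indicator {x : ℕ × ℕ | lam < T} wU x := by
      intro x
      by_cases hx : x ∈ {x : ℕ × ℕ | lam < MU k k' f x}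
      · rw [Set.indicator_of_mem hx]
        have hlt := lt_of_lt_of_le hx (MU_le hk1 hk2 hk' f x)
        rcases lt_sup_iff.1 hlt with hlt' | h3
        · rcases lt_sup_iff.1 hlt' with h1 | h2
          · calc wU x = Set.indicator {x : ℕ × ℕ | lam < f x} wU x :=
                  (Set.indicator_of_mem (show x ∈ {x : ℕ × ℕ | lam < f x} from h1) wU).symm
              _ ≤ _ := le_trans le_self_add le_self_add
          · calc wU x = Set.indicator {x : ℕ × ℕ | lam < A x.1} wU x :=
                  (Set.indicator_of_mem (show x ∈ {x : ℕ × ℕ | lam < A x.1} from h2) wU).symm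
              _ ≤ _ := le_trans le_add_self le_self_add
        · calc wU x = Set.indicator {x : ℕ × ℕ | lam < T} wU x :=
                (Set.indicator_of_mem (show x ∈ {x : ℕ × ℕ | lam < T} from h3) wU).symm
            _ ≤ _ := le_add_self
      · rw [Set.indicator_of_notMem hx]
        exact zero_le
    have hE : (∑' y : {x : ℕ × ℕ | lam < MU k k' f x}, wU y.val) ≤
        (∑' x : ℕ × ℕ, Set.indicator {x : ℕ × ℕ | lam < f x} wU x) +
        (∑' x : ℕ × ℕ, Set.indicator {x : ℕ × ℕ | lam < A x.1} wU x) +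
        (∑' x : ℕ × ℕ, Set.indicator {x : ℕ × ℕ | lam < T} wU x) := by
      rw [tsum_subtype]
      calc (∑' x : ℕ × ℕ, Set.indicator {x : ℕ × ℕ | lam < MU k k' f x} wU x)
          ≤ ∑' x : ℕ × ℕ, (Set.indicator {x : ℕ × ℕ | lam < f x} wU x +
              Set.indicator {x : ℕ × ℕ | lam < A x.1} wU x +
              Set.indicator {x : ℕ × ℕ | lam < T} wU x) := ENNReal.tsum_le_tsum hptwise
        _ = _ := by rw [ENNReal.tsum_add, ENNReal.tsum_add]
    have claim1 : lam ^ p * (∑' x : ℕ × ℕ, Set.indicator {x : ℕ × ℕ | lam < f x} wU x) ≤ Jt := by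
      rw [← ENNReal.tsum_mul_left]
      refine ENNReal.tsum_le_tsum fun x => ?_
      by_cases hx : x ∈ {x : ℕ × ℕ | lam < f x}
      · rw [Set.indicator_of_mem hx]
        exact mul_le_mul_left (ENNReal.rpow_le_rpow (le_of_lt hx) hp0.le) _
      · rw [Set.indicator_of_notMem hx, mul_zero]
        exact zero_le
    have claim2 : lam ^ p * (∑' x : ℕ × ℕ, Set.indicator {x : ℕ × ℕ | lam < A x.1} wU x) ≤ Jt := by
      have hμ : (∑' x : ℕ × ℕ, Set.indicator {x : ℕ × ℕ | lam < A x.1} wU x)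
          = ∑' n, if lam < A n then D n else 0 := by
        rw [ENNReal.tsum_prod']
        refine tsum_congr fun n => ?_
        by_cases hn : lam < A n
        · rw [if_pos hn, ← comp_mass n]
          exact tsum_congr fun i => Set.indicator_of_mem (show (n, i) ∈ {x : ℕ × ℕ | lam < A x.1} from hn) wU
        · rw [if_neg hn]
          have : ∀ i : ℕ, Set.indicator {x : ℕ × ℕ | lam < A x.1} wU (n, i) = 0 :=
            fun i => Set.indicator_of_notMem (show (n, i) ∉ {x : ℕ × ℕ | lam < A x.1} from hn) wU
          simp [this]
      rw [hμ, ← ENNReal.tsum_mul_left, hJt]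
      refine ENNReal.tsum_le_tsum fun n => ?_
      by_cases hn : lam < A n
      · rw [if_pos hn]
        refine weak_bound hp (D_ne_zero n) (D_ne_top n) ?_ hn
        have hh := holder (fun i => f (n, i)) (fun i => wU (n, i)) hp
        rwa [comp_mass n] at hh
      · rw [if_neg hn, mul_zero]
        exact zero_le
    have claim3 : lam ^ p * (∑' x : ℕ × ℕ, Set.indicator {x : ℕ × ℕ | lam < T} wU x) ≤ Jt := by
      by_cases hT' : lam < T
      · have hμ : (∑' x : ℕ × ℕ, Set.indicator {x : ℕ × ℕ | lam < T} wU x) = 2 := by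
          rw [← total_mass]
          exact tsum_congr fun x => Set.indicator_of_mem (show x ∈ {x : ℕ × ℕ | lam < T} from hT') wU
        rw [hμ]
        refine weak_bound hp (by norm_num) (by norm_num) ?_ hT'
        have hh := holder f wU hp
        rwa [total_mass] at hh
      · have hμ : (∑' x : ℕ × ℕ, Set.indicator {x : ℕ × ℕ | lam < T} wU x) = 0 := by
          have : ∀ x : ℕ × ℕ, Set.indicator {x : ℕ × ℕ | lam < T} wU x = 0 :=
            fun x => Set.indicator_of_notMem (show x ∉ {x : ℕ × ℕ | lam < T} from hT') wU
          simp [this]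
        rw [hμ, mul_zero]
        exact zero_le
    have hfinal : lam ^ p * (∑' y : {x : ℕ × ℕ | lam < MU k k' f x}, wU y.val) ≤ 3 * Jt := by
      calc lam ^ p * (∑' y : {x : ℕ × ℕ | lam < MU k k' f x}, wU y.val)
          ≤ lam ^ p * ((∑' x : ℕ × ℕ, Set.indicator {x : ℕ × ℕ | lam < f x} wU x) +
            (∑' x : ℕ × ℕ, Set.indicator {x : ℕ × ℕ | lam < A x.1} wU x) +
            (∑' x : ℕ × ℕ, Set.indicator {x : ℕ × ℕ | lam < T} wU x)) := mul_le_mul_right hE _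
        _ = lam ^ p * (∑' x : ℕ × ℕ, Set.indicator {x : ℕ × ℕ | lam < f x} wU x) +
            lam ^ p * (∑' x : ℕ × ℕ, Set.indicator {x : ℕ × ℕ | lam < A x.1} wU x) +
            lam ^ p * (∑' x : ℕ × ℕ, Set.indicator {x : ℕ × ℕ | lam < T} wU x) := by ring
        _ ≤ Jt + Jt + Jt := add_le_add (add_le_add claim1 claim2) claim3
        _ = 3 * Jt := by ring
    calc lam * (∑' y : {x : ℕ × ℕ | lam < MU k k' f x}, wU y.val) ^ (1/p)
        = (lam ^ p * (∑' y : {x : ℕ × ℕ | lam < MU k k' f x}, wU y.val)) ^ (1/p) := by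
          rw [ENNReal.mul_rpow_of_nonneg _ _ h1p0.le, ← ENNReal.rpow_mul,
            mul_one_div_cancel hp0.ne', ENNReal.rpow_one]
      _ ≤ (3 * Jt) ^ (1/p) := ENNReal.rpow_le_rpow hfinal h1p0.le
      _ = 3 ^ (1/p) * Jt ^ (1/p) := ENNReal.mul_rpow_of_nonneg _ _ h1p0.le
      _ ≤ 3 * Jt ^ (1/p) := by
          refine mul_le_mul_left ?_ _
          calc (3:ℝ≥0∞) ^ (1/p) ≤ 3 ^ (1:ℝ) :=
                ENNReal.rpow_le_rpow_of_exponent_le (by norm_num) (by rw [div_le_one hp0]; exact hp)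
            _ = 3 := ENNReal.rpow_one 3
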